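/- For a finite simple graph G, th_⌊Z⌋(G) = 3 if and only if G is isomorphic to one of the following ten graphs: C_4, P_4, 2K_2, K_1 ⊔ P_3, K_2 ⊔ 2K_1, 4K_1, K_3, P_3, K_1 ⊔ K_2, 3K_1. -/

import Mathlib

open SimpleGraph

namespace ZFT

variable {V : Type*} {α : Type*} {β : Type*}

/-! ### Standard zero forcing (simultaneous propagation) -/

/-- One round of simultaneous standard zero forcing: a blue vertex forces its
unique white neighbor. -/
def zStep (G : SimpleGraph V) (S : Set V) : Set V :=
  S ∪ {w | ∃ u ∈ S, G.Adj u w ∧ ∀ x, G.Adj u x → x ∉ S → x = w}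

/-- `B` is a standard zero forcing set of `G`. -/
def IsZeroForcingSet (G : SimpleGraph V) (B : Set V) : Prop :=
  ∃ t : ℕ, (zStep G)^[t] B = Set.univ

/-- The standard propagation time `pt_Z(G;B)` (`⊤` if `B` is not a zero forcing set). -/
noncomputable def ptZ (G : SimpleGraph V) (B : Set V) : ℕ∞ :=
  sInf {n : ℕ∞ | ∃ t : ℕ, n = t ∧ (zStep G)^[t] B = Set.univ}

/-- The standard throttling number `th_Z(G;B) = |B| + pt_Z(G;B)`. -/
noncomputable def thZ (G : SimpleGraph V) (B : Set V) : ℕ∞ :=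
  (B.ncard : ℕ∞) + ptZ G B

/-- The standard throttling number `th_Z(G)`. -/
noncomputable def thZgraph (G : SimpleGraph V) : ℕ∞ :=
  sInf {n : ℕ∞ | ∃ B : Set V, IsZeroForcingSet G B ∧ n = thZ G B}

/-- The standard zero forcing number `Z(G)`. -/
noncomputable def Znum (G : SimpleGraph V) : ℕ :=
  sInf {k : ℕ | ∃ B : Set V, IsZeroForcingSet G B ∧ B.ncard = k}

/-- The standard propagation time `pt_Z(G)`, minimized over minimum zero forcing sets. -/
noncomputable def ptZgraph (G : SimpleGraph V) : ℕ∞ :=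
  sInf {n : ℕ∞ | ∃ B : Set V, IsZeroForcingSet G B ∧ B.ncard = Znum G ∧ n = ptZ G B}

/-! ### Sets of standard forces -/

/-- Validity of a single standard force `u → w` when `blue` is the blue set. -/
def zForceValid (G : SimpleGraph V) (blue : Set V) (u w : V) : Prop :=
  u ∈ blue ∧ w ∉ blue ∧ G.Adj u w ∧ ∀ x, G.Adj u x → x ∉ blue → x = w

/-- Validity of a chronological list of standard forces starting from a blue set. -/
def zValidList (G : SimpleGraph V) : Set V → List (V × V) → Prop
  | _, [] => True
  | blue, p :: L => zForceValid G blue p.1 p.2 ∧ zValidList G (insert p.2 blue) L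

/-- The blue set after performing all forces in a list, starting from `B`. -/
def endBlue (B : Set V) (L : List (V × V)) : Set V :=
  B ∪ {w | ∃ u, (u, w) ∈ L}

/-- The set of vertices that have performed a force in a list. -/
def endForced (L : List (V × V)) : Set V := {u | ∃ w, (u, w) ∈ L}

/-- `F` is a set of standard forces of `B` in `G` (recorded from a maximal
chronological list of forces). -/
def IsZForceSet (G : SimpleGraph V) (B : Set V) (F : Set (V × V)) : Prop :=
  ∃ L : List (V × V), zValidList G B L ∧
    (∀ u w, ¬ zForceValid G (endBlue B L) u w) ∧ F = {p | p ∈ L}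

/-- The set of blue vertices at time `t` when the forces of `F` are performed at the
earliest possible time steps, starting from `B` blue. -/
def zBlueAt (G : SimpleGraph V) (F : Set (V × V)) (B : Set V) : ℕ → Set V
  | 0 => B
  | t + 1 =>
      zBlueAt G F B t ∪ {w | ∃ v, (v, w) ∈ F ∧ zForceValid G (zBlueAt G F B t) v w}

/-- The standard propagation time `pt_Z(G;F)` of a set of forces `F` of `B`. -/
noncomputable def ptZofF (G : SimpleGraph V) (F : Set (V × V)) (B : Set V) : ℕ∞ :=
  sInf {n : ℕ∞ | ∃ t : ℕ, n = t ∧ zBlueAt G F B t = Set.univ}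

/-! ### `⌊Z⌋` (minor monotone floor) forcing -/

/-- Validity of a single `⌊Z⌋` force `u → w`: `u` is blue and has not yet forced, `w`
is white, and either `w` is the unique white neighbor of `u`, or all neighbors of `u`
are blue (a hop). -/
def zfForceValid (G : SimpleGraph V) (blue forced : Set V) (u w : V) : Prop :=
  u ∈ blue ∧ w ∉ blue ∧ u ∉ forced ∧
    ((G.Adj u w ∧ ∀ x, G.Adj u x → x ∉ blue → x = w) ∨ ∀ x, G.Adj u x → x ∈ blue)

/-- Validity of a chronological list of `⌊Z⌋` forces. -/
def zfValidList (G : SimpleGraph V) : Set V → Set V → List (V × V) → Prop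
  | _, _, [] => True
  | blue, forced, p :: L =>
      zfForceValid G blue forced p.1 p.2 ∧
        zfValidList G (insert p.2 blue) (insert p.1 forced) L

/-- `F` is a set of `⌊Z⌋` forces of `B` in `G` (recorded from a maximal chronological
list of `⌊Z⌋` forces starting with `B` blue). -/
def IsZFForceSet (G : SimpleGraph V) (B : Set V) (F : Set (V × V)) : Prop :=
  ∃ L : List (V × V), zfValidList G B ∅ L ∧
    (∀ u w, ¬ zfForceValid G (endBlue B L) (endForced L) u w) ∧ F = {p | p ∈ L}

/-- The set of blue vertices at time `t` when the `⌊Z⌋` forces of `F` are performed at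
the earliest possible time steps, starting from `B` blue. -/
def zfBlueAt (G : SimpleGraph V) (F : Set (V × V)) (B : Set V) : ℕ → Set V
  | 0 => B
  | t + 1 =>
      zfBlueAt G F B t ∪
        {w | ∃ v, (v, w) ∈ F ∧ v ∈ zfBlueAt G F B t ∧ w ∉ zfBlueAt G F B t ∧
          (∀ w', (v, w') ∈ F → w' ∈ zfBlueAt G F B t → w' ∈ B) ∧
          ((G.Adj v w ∧ ∀ x, G.Adj v x → x ∉ zfBlueAt G F B t → x = w) ∨
            ∀ x, G.Adj v x → x ∈ zfBlueAt G F B t)}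

/-- The `⌊Z⌋` propagation time `pt_⌊Z⌋(G;F)` of a set of `⌊Z⌋` forces `F` of `B`. -/
noncomputable def ptZFofF (G : SimpleGraph V) (F : Set (V × V)) (B : Set V) : ℕ∞ :=
  sInf {n : ℕ∞ | ∃ t : ℕ, n = t ∧ zfBlueAt G F B t = Set.univ}

/-- The `⌊Z⌋` propagation time `pt_⌊Z⌋(G;B)`, minimized over sets of `⌊Z⌋` forces of `B`. -/
noncomputable def ptZF (G : SimpleGraph V) (B : Set V) : ℕ∞ :=
  sInf {n : ℕ∞ | ∃ F : Set (V × V), IsZFForceSet G B F ∧ n = ptZFofF G F B}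

/-- The `⌊Z⌋` throttling number `th_⌊Z⌋(G;B) = |B| + pt_⌊Z⌋(G;B)`. -/
noncomputable def thZF (G : SimpleGraph V) (B : Set V) : ℕ∞ :=
  (B.ncard : ℕ∞) + ptZF G B

/-- The `⌊Z⌋` throttling number `th_⌊Z⌋(G)`, minimized over all `B ⊆ V(G)`. -/
noncomputable def thZFgraph (G : SimpleGraph V) : ℕ∞ :=
  sInf {n : ℕ∞ | ∃ B : Set V, n = thZF G B}

/-- `B` is a `⌊Z⌋` forcing set of `G`. -/
def IsZFForcingSet (G : SimpleGraph V) (B : Set V) : Prop :=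
  ∃ F : Set (V × V), IsZFForceSet G B F ∧ B ∪ {w | ∃ u, (u, w) ∈ F} = Set.univ

/-- The `⌊Z⌋` forcing number `⌊Z⌋(G)`. -/
noncomputable def ZFnum (G : SimpleGraph V) : ℕ :=
  sInf {k : ℕ | ∃ B : Set V, IsZFForcingSet G B ∧ B.ncard = k}

/-- The `⌊Z⌋` propagation time `pt_⌊Z⌋(G)`, minimized over minimum `⌊Z⌋` forcing sets. -/
noncomputable def ptZFgraph (G : SimpleGraph V) : ℕ∞ :=
  sInf {n : ℕ∞ | ∃ B : Set V, IsZFForcingSet G B ∧ B.ncard = ZFnum G ∧ n = ptZF G B}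

/-! ### Contractions, minors, and products -/

/-- The graph obtained from `H` by contracting (all) the edges in `C`: its vertices are
the connected components of the spanning subgraph of `H` with edge set `C ∩ E(H)`, and
two distinct components are adjacent iff `H` has an edge between them. -/
def contractEdges (H : SimpleGraph α) (C : Set (Sym2 α)) :
    SimpleGraph (SimpleGraph.fromEdgeSet C ⊓ H).ConnectedComponent where
  Adj c d := c ≠ d ∧ ∃ a b, H.Adj a b ∧
      (SimpleGraph.fromEdgeSet C ⊓ H).connectedComponentMk a = c ∧
      (SimpleGraph.fromEdgeSet C ⊓ H).connectedComponentMk b = d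
  symm := ⟨by
    rintro c d ⟨hcd, a, b, hab, ha, hb⟩
    exact ⟨hcd.symm, b, a, hab.symm, hb, ha⟩⟩
  loopless := ⟨fun c h => h.1 rfl⟩

/-- `G` is a minor of `H`: `G` is isomorphic to a subgraph of a graph obtained from an
induced subgraph of `H` by contracting a set of edges. -/
def IsMinor (G : SimpleGraph β) (H : SimpleGraph α) : Prop :=
  ∃ (s : Set α) (C : Set (Sym2 s))
    (G'' : SimpleGraph (SimpleGraph.fromEdgeSet C ⊓ H.induce s).ConnectedComponent),
      G'' ≤ contractEdges (H.induce s) C ∧ Nonempty (G ≃g G'')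

/-- The Cartesian product `K_a □ P_{b+1}`. -/
def prodKP (a b : ℕ) : SimpleGraph (Fin a × Fin (b + 1)) :=
  (⊤ : SimpleGraph (Fin a)) □ SimpleGraph.pathGraph (b + 1)

/-- The path edges of `K_a □ P_{b+1}` (edges within the copies of `P_{b+1}`). -/
def pathEdges (a b : ℕ) : Set (Sym2 (Fin a × Fin (b + 1))) :=
  {e | ∃ (i : Fin a) (j j' : Fin (b + 1)),
    (SimpleGraph.pathGraph (b + 1)).Adj j j' ∧ e = s((i, j), (i, j'))}

/-- The complete edges of `K_a □ P_{b+1}` (edges within the copies of `K_a`). -/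
def completeEdges (a b : ℕ) : Set (Sym2 (Fin a × Fin (b + 1))) :=
  {e | ∃ (i i' : Fin a) (j : Fin (b + 1)), i ≠ i' ∧ e = s((i, j), (i', j))}

/-- The star `K_{1,n-1}` on `n` vertices: vertex `0` is adjacent to all others. -/
def starGraph (n : ℕ) : SimpleGraph (Fin n) where
  Adj i j := i ≠ j ∧ ((i : ℕ) = 0 ∨ (j : ℕ) = 0)
  symm := ⟨by rintro i j ⟨h1, h2⟩; exact ⟨h1.symm, h2.symm⟩⟩
  loopless := ⟨fun i h => h.1 rfl⟩

/-- The independence number `α(G)`. -/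
noncomputable def indepNum (G : SimpleGraph V) : ℕ :=
  sSup {k : ℕ | ∃ s : Set V, (∀ a ∈ s, ∀ b ∈ s, a ≠ b → ¬ G.Adj a b) ∧ s.ncard = k}




section Aux
set_option linter.unusedSectionVars false

variable {V : Type*} [Fintype V] {G : SimpleGraph V} {B : Set V} {F : Set (V × V)}

lemma exists_le_of_sInf_le {s : Set ℕ∞} {k : ℕ} (h : sInf s ≤ (k : ℕ∞)) :
    ∃ a ∈ s, a ≤ (k : ℕ∞) := by
  by_contra hc
  push_neg at hc
  have h1 : (k : ℕ∞) + 1 ≤ sInf s := le_sInf (fun a ha => Order.add_one_le_of_lt (hc a ha))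
  have h2 : (k : ℕ∞) + 1 ≤ (k : ℕ∞) := h1.trans h
  have h3 : ((k + 1 : ℕ) : ℕ∞) ≤ ((k : ℕ) : ℕ∞) := by push_cast; exact h2
  have := Nat.cast_le.mp h3
  omega

/-- One step of the earliest-time `⌊Z⌋` propagation. -/
def zfstep (G : SimpleGraph V) (F : Set (V × V)) (B S : Set V) : Set V :=
  S ∪ {w | ∃ v, (v, w) ∈ F ∧ v ∈ S ∧ w ∉ S ∧
      (∀ w', (v, w') ∈ F → w' ∈ S → w' ∈ B) ∧
      ((G.Adj v w ∧ ∀ x, G.Adj v x → x ∉ S → x = w) ∨ ∀ x, G.Adj v x → x ∈ S)}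

lemma zfBlueAt_succ (t : ℕ) :
    zfBlueAt G F B (t + 1) = zfstep G F B (zfBlueAt G F B t) := rfl

lemma zfBlueAt_mono (t : ℕ) : zfBlueAt G F B t ⊆ zfBlueAt G F B (t + 1) :=
  Set.subset_union_left

lemma zfBlueAt_stall {t : ℕ} (h : zfBlueAt G F B (t + 1) = zfBlueAt G F B t) :
    zfBlueAt G F B (t + 2) = zfBlueAt G F B (t + 1) := by
  rw [zfBlueAt_succ (t + 1), h, ← zfBlueAt_succ t]
  exact h

lemma zfBlueAt_empty : ∀ t : ℕ, zfBlueAt G F (∅ : Set V) t = ∅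
  | 0 => rfl
  | (t + 1) => by
      rw [zfBlueAt_succ, zfBlueAt_empty t]
      ext w
      simp [zfstep]

lemma validList_firsts : ∀ (L : List (V × V)) (blue forced : Set V),
    zfValidList G blue forced L →
    (∀ p ∈ L, p.1 ∉ forced) ∧ L.Pairwise (fun p q => p.1 ≠ q.1) := by
  intro L
  induction L with
  | nil => intro _ _ _; exact ⟨by simp, List.Pairwise.nil⟩
  | cons p L ih =>
      intro blue forced hL
      obtain ⟨hp, hL'⟩ := hL
      obtain ⟨ih1, ih2⟩ := ih _ _ hL'
      constructor
      · rintro q hq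
        rcases List.mem_cons.mp hq with rfl | hq
        · exact hp.2.2.1
        · intro hqf
          exact ih1 q hq (Set.mem_insert_iff.mpr (Or.inr hqf))
      · refine List.Pairwise.cons ?_ ih2
        intro q hq
        have := ih1 q hq
        intro hpq
        exact this (hpq ▸ Set.mem_insert _ _)

lemma isZF_functional (h : IsZFForceSet G B F) :
    ∀ v w w', (v, w) ∈ F → (v, w') ∈ F → w = w' := by
  obtain ⟨L, hL, _, rfl⟩ := h
  intro v w w' hw hw'
  have hp := (validList_firsts L B ∅ hL).2
  by_contra hne
  have hne' : (v, w) ≠ (v, w') := by simp [hne]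
  haveI hsym : Std.Symm (fun p q : V × V => p.1 ≠ q.1) := ⟨fun p q h => h.symm⟩
  exact (hp.forall hw hw' hne') rfl

lemma ncard_le_of_witness (hfun : ∀ v w w', (v, w) ∈ F → (v, w') ∈ F → w = w')
    (N W : Set V) (h : ∀ w ∈ N, ∃ v ∈ W, (v, w) ∈ F) : N.ncard ≤ W.ncard := by
  classical
  set f : V → V := fun v => if hv : ∃ w, (v, w) ∈ F then hv.choose else v with hf
  have hsub : N ⊆ f '' W := by
    intro w hw
    obtain ⟨v, hvW, hvF⟩ := h w hw
    refine ⟨v, hvW, ?_⟩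
    have hv : ∃ w, (v, w) ∈ F := ⟨w, hvF⟩
    simp only [hf, dif_pos hv]
    exact hfun v _ _ hv.choose_spec hvF
  calc N.ncard ≤ (f '' W).ncard := Set.ncard_le_ncard hsub (Set.toFinite _)
    _ ≤ W.ncard := Set.ncard_image_le (Set.toFinite _)

lemma zfstep_diff_witness {S : Set V} {w : V} (hw : w ∈ zfstep G F B S) (hw2 : w ∉ S) :
    ∃ v, (v, w) ∈ F ∧ v ∈ S ∧ w ∉ S ∧
      (∀ w', (v, w') ∈ F → w' ∈ S → w' ∈ B) ∧
      ((G.Adj v w ∧ ∀ x, G.Adj v x → x ∉ S → x = w) ∨ ∀ x, G.Adj v x → x ∈ S) := by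
  rcases hw with h | h
  · exact absurd h hw2
  · exact h

lemma ncard_zfstep_le (hfun : ∀ v w w', (v, w) ∈ F → (v, w') ∈ F → w = w') (S : Set V) :
    (zfstep G F B S).ncard ≤ S.ncard + S.ncard := by
  refine le_trans (Set.ncard_union_le _ _) (add_le_add le_rfl ?_)
  refine ncard_le_of_witness hfun _ S ?_
  rintro w ⟨v, hv1, hv2, _⟩
  exact ⟨v, hv2, hv1⟩

lemma ncard_zfBlueAt_le (hfun : ∀ v w w', (v, w) ∈ F → (v, w') ∈ F → w = w') :
    ∀ t : ℕ, (zfBlueAt G F B t).ncard ≤ B.ncard * 2 ^ t := by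
  intro t
  induction t with
  | zero => show B.ncard ≤ B.ncard * 2 ^ 0; simp
  | succ t ih =>
      rw [zfBlueAt_succ]
      have h1 := ncard_zfstep_le (G := G) (B := B) hfun (zfBlueAt G F B t)
      have h3 : B.ncard * 2 ^ t + B.ncard * 2 ^ t = B.ncard * 2 ^ (t + 1) := by ring
      omega

lemma thZF_le_of (hF : IsZFForceSet G B F) (t : ℕ) (h : zfBlueAt G F B t = Set.univ) :
    thZF G B ≤ (B.ncard : ℕ∞) + t := by
  have h1 : ptZFofF G F B ≤ (t : ℕ∞) := sInf_le ⟨t, rfl, h⟩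
  have h2 : ptZF G B ≤ ptZFofF G F B := sInf_le ⟨F, hF, rfl⟩
  exact add_le_add le_rfl (h2.trans h1)

lemma isZF_univ : IsZFForceSet G (Set.univ : Set V) (∅ : Set (V × V)) := by
  refine ⟨[], trivial, ?_, ?_⟩
  · intro u w hv
    exact hv.2.1 (Set.mem_union_left _ (Set.mem_univ w))
  · ext p
    simp [List.not_mem_nil]

lemma thZFgraph_le_card : thZFgraph G ≤ (Fintype.card V : ℕ∞) := by
  have h1 : zfBlueAt G (∅ : Set (V × V)) (Set.univ : Set V) 0 = Set.univ := rfl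
  have h2 := thZF_le_of (G := G) isZF_univ 0 h1
  have h3 : thZFgraph G ≤ thZF G Set.univ := sInf_le ⟨Set.univ, rfl⟩
  refine h3.trans (h2.trans ?_)
  simp [Set.ncard_univ, Nat.card_eq_fintype_card]

lemma extract {k : ℕ} (h : thZFgraph G ≤ (k : ℕ∞)) :
    ∃ (B : Set V) (F : Set (V × V)) (t : ℕ), IsZFForceSet G B F ∧
      zfBlueAt G F B t = Set.univ ∧ B.ncard + t ≤ k := by
  obtain ⟨a, ⟨B, rfl⟩, ha⟩ := exists_le_of_sInf_le h
  unfold thZF at ha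
  have hb : (B.ncard : ℕ∞) ≤ (k : ℕ∞) := le_trans le_self_add ha
  have hbn : B.ncard ≤ k := Nat.cast_le.mp hb
  have hptle : ptZF G B ≤ (k : ℕ∞) := le_trans le_add_self ha
  have hptne : ptZF G B ≠ ⊤ := ne_top_of_le_ne_top (WithTop.coe_ne_top) hptle
  obtain ⟨m, hm⟩ : ∃ m : ℕ, (m : ℕ∞) = ptZF G B := by
    lift (ptZF G B) to ℕ using hptne with m hm
    exact ⟨m, rfl⟩
  have hbm : B.ncard + m ≤ k := by
    have h1 : ((B.ncard + m : ℕ) : ℕ∞) ≤ ((k : ℕ) : ℕ∞) := by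
      push_cast
      rw [hm]
      exact ha
    exact Nat.cast_le.mp h1
  have hpt : ptZF G B ≤ ((m : ℕ) : ℕ∞) := le_of_eq hm.symm
  unfold ptZF at hpt
  obtain ⟨a2, ⟨F, hF, rfl⟩, ha2⟩ := exists_le_of_sInf_le hpt
  unfold ptZFofF at ha2
  obtain ⟨a3, ⟨t, rfl, ht⟩, ha3⟩ := exists_le_of_sInf_le ha2
  refine ⟨B, F, t, hF, ht, ?_⟩
  have := Nat.cast_le.mp ha3
  omega

lemma card_eq_ncard_univ : Fintype.card V = (Set.univ : Set V).ncard := by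
  simp [Set.ncard_univ, Nat.card_eq_fintype_card]

lemma three_le_thZFgraph (hV : 3 ≤ Fintype.card V) : 3 ≤ thZFgraph G := by
  by_contra hc
  push_neg at hc
  have hne : thZFgraph G ≠ ⊤ := ne_top_of_lt hc
  obtain ⟨n, hn⟩ : ∃ n : ℕ, (n : ℕ∞) = thZFgraph G := by
    lift (thZFgraph G) to ℕ using hne with n hn
    exact ⟨n, rfl⟩
  have hn3 : n < 3 := by
    rw [← hn] at hc
    exact_mod_cast hc
  have h2 : thZFgraph G ≤ ((2 : ℕ) : ℕ∞) := by
    rw [← hn]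
    exact_mod_cast Nat.lt_succ_iff.mp hn3
  obtain ⟨B, F, t, hF, hu, hle⟩ := extract h2
  have hfun := isZF_functional hF
  have hcard : Fintype.card V ≤ B.ncard * 2 ^ t := by
    have h3 := ncard_zfBlueAt_le (G := G) (B := B) hfun t
    rw [hu, ← card_eq_ncard_univ] at h3
    exact h3
  rcases Nat.eq_zero_or_pos B.ncard with h0 | h1
  · have hB : B = ∅ := (Set.ncard_eq_zero (Set.toFinite _)).mp h0
    subst hB
    rw [zfBlueAt_empty] at hu
    have : Fintype.card V = 0 := by
      rw [card_eq_ncard_univ, ← hu]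
      simp
    omega
  · have ht1 : t ≤ 1 := by omega
    interval_cases t <;> simp [pow_succ] at hcard <;> omega

variable {V : Type*} [Fintype V] {G : SimpleGraph V} {B : Set V} {F : Set (V × V)}

/-- The force condition for `u` (with co-blue vertex `v`) to force `w` at the first
time step from blue set `{u, v}`. -/
def okP (G : SimpleGraph V) (u v w : V) : Prop :=
  (G.Adj u w ∧ ∀ x, ¬ G.Adj u x ∨ x = u ∨ x = v ∨ x = w) ∨ ∀ x, ¬ G.Adj u x ∨ x = u ∨ x = v

/-- Structural condition on a 4-vertex graph equivalent to `th_⌊Z⌋ = 3`. -/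
def P4cond (G : SimpleGraph V) : Prop :=
  ∃ u1 u2 w1 w2 : V, u1 ≠ u2 ∧ w1 ≠ w2 ∧ w1 ≠ u1 ∧ w1 ≠ u2 ∧ w2 ≠ u1 ∧ w2 ≠ u2 ∧
    okP G u1 u2 w1 ∧ okP G u2 u1 w2

lemma ncard_quad {u1 u2 w1 w2 : V} (h12 : u1 ≠ u2) (hw : w1 ≠ w2) (h11 : w1 ≠ u1)
    (h21 : w1 ≠ u2) (h12' : w2 ≠ u1) (h22 : w2 ≠ u2) :
    ({u1, u2, w1, w2} : Set V).ncard = 4 := by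
  rw [Set.ncard_insert_of_notMem (by simp only [Set.mem_insert_iff, Set.mem_singleton_iff]; push_neg; exact ⟨h12, h11.symm, h12'.symm⟩) (Set.toFinite _),
      Set.ncard_insert_of_notMem (by simp only [Set.mem_insert_iff, Set.mem_singleton_iff]; push_neg; exact ⟨h21.symm, h22.symm⟩) (Set.toFinite _),
      Set.ncard_insert_of_notMem (by simp only [Set.mem_singleton_iff]; exact hw) (Set.toFinite _),
      Set.ncard_singleton]

lemma quad_univ (h4 : Fintype.card V = 4) {u1 u2 w1 w2 : V} (h12 : u1 ≠ u2) (hw : w1 ≠ w2)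
    (h11 : w1 ≠ u1) (h21 : w1 ≠ u2) (h12' : w2 ≠ u1) (h22 : w2 ≠ u2) :
    ({u1, u2, w1, w2} : Set V) = Set.univ := by
  refine Set.eq_of_subset_of_ncard_le (Set.subset_univ _) ?_ (Set.toFinite _)
  rw [← card_eq_ncard_univ, h4, ncard_quad h12 hw h11 h21 h12' h22]

lemma thZFgraph_le_three_of_P4 (h4 : Fintype.card V = 4) (hP : P4cond G) :
    thZFgraph G ≤ 3 := by
  obtain ⟨u1, u2, w1, w2, h12, hw, h11, h21, h12', h22, hok1, hok2⟩ := hP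
  set B : Set V := {u1, u2} with hB
  set L : List (V × V) := [(u1, w1), (u2, w2)] with hLdef
  set F : Set (V × V) := {p | p ∈ L} with hFdef
  have hu1B : u1 ∈ B := Set.mem_insert _ _
  have hu2B : u2 ∈ B := Set.mem_insert_of_mem _ rfl
  have hw1B : w1 ∉ B := by simp [hB, h11, h21]
  have hw2B : w2 ∉ B := by simp [hB, h12', h22]
  have hBmem : ∀ x, x ∈ B ↔ x = u1 ∨ x = u2 := by intro x; simp [hB]
  have huniv : ({u1, u2, w1, w2} : Set V) = Set.univ :=
    quad_univ h4 h12 hw h11 h21 h12' h22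
  -- the two forces are valid from B
  have hc1 : (G.Adj u1 w1 ∧ ∀ x, G.Adj u1 x → x ∉ B → x = w1) ∨ ∀ x, G.Adj u1 x → x ∈ B := by
    rcases hok1 with ⟨ha, hx⟩ | hx
    · refine Or.inl ⟨ha, fun x hadj hxB => ?_⟩
      rcases hx x with h | h | h | h
      · exact absurd hadj h
      · exact absurd ((hBmem x).mpr (Or.inl h)) hxB
      · exact absurd ((hBmem x).mpr (Or.inr h)) hxB
      · exact h
    · refine Or.inr fun x hadj => ?_
      rcases hx x with h | h | h
      · exact absurd hadj h
      · exact (hBmem x).mpr (Or.inl h)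
      · exact (hBmem x).mpr (Or.inr h)
  have hc2 : (G.Adj u2 w2 ∧ ∀ x, G.Adj u2 x → x ∉ B → x = w2) ∨ ∀ x, G.Adj u2 x → x ∈ B := by
    rcases hok2 with ⟨ha, hx⟩ | hx
    · refine Or.inl ⟨ha, fun x hadj hxB => ?_⟩
      rcases hx x with h | h | h | h
      · exact absurd hadj h
      · exact absurd ((hBmem x).mpr (Or.inr h)) hxB
      · exact absurd ((hBmem x).mpr (Or.inl h)) hxB
      · exact h
    · refine Or.inr fun x hadj => ?_
      rcases hx x with h | h | h
      · exact absurd hadj h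
      · exact (hBmem x).mpr (Or.inr h)
      · exact (hBmem x).mpr (Or.inl h)
  have hmemF1 : (u1, w1) ∈ F := by simp [hFdef, hLdef]
  have hmemF2 : (u2, w2) ∈ F := by simp [hFdef, hLdef]
  have hFforce : IsZFForceSet G B F := by
    refine ⟨L, ?_, ?_, rfl⟩
    · refine ⟨⟨hu1B, hw1B, Set.notMem_empty _, hc1⟩, ⟨Set.mem_insert_of_mem _ hu2B,
        ?_, ?_, ?_⟩, trivial⟩
      · simp only [Set.mem_insert_iff]
        push_neg
        exact ⟨hw.symm, hw2B⟩
      · simp only [Set.mem_insert_iff]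
        push_neg
        exact ⟨h12.symm, Set.notMem_empty _⟩
      · rcases hc2 with ⟨ha, hx⟩ | hx
        · refine Or.inl ⟨ha, fun x hadj hxB => ?_⟩
          refine hx x hadj fun h => hxB (Set.mem_insert_of_mem _ h)
        · exact Or.inr fun x hadj => Set.mem_insert_of_mem _ (hx x hadj)
    · -- maximality : everything is blue
      have hend : endBlue B L = Set.univ := by
        rw [← huniv]
        ext x
        simp only [endBlue, hB, hLdef, Set.mem_union, Set.mem_setOf_eq, List.mem_cons,
          List.not_mem_nil, or_false, Prod.mk.injEq, Set.mem_insert_iff,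
          Set.mem_singleton_iff]
        constructor
        · rintro ((rfl | rfl) | ⟨u, (⟨rfl, rfl⟩ | ⟨rfl, rfl⟩)⟩) <;> tauto
        · rintro (rfl | rfl | rfl | rfl)
          · tauto
          · tauto
          · exact Or.inr ⟨u1, Or.inl ⟨rfl, rfl⟩⟩
          · exact Or.inr ⟨u2, Or.inr ⟨rfl, rfl⟩⟩
      intro u w hv
      rw [hend] at hv
      exact hv.2.1 (Set.mem_univ w)
  have hblue1 : zfBlueAt G F B 1 = Set.univ := by
    refine Set.eq_univ_of_univ_subset ?_
    rw [← huniv]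
    rw [show zfBlueAt G F B 1 = zfstep G F B B from rfl]
    intro x hx
    rcases (by simpa using hx : x = u1 ∨ x = u2 ∨ x = w1 ∨ x = w2) with rfl | rfl | rfl | rfl
    · exact Set.mem_union_left _ hu1B
    · exact Set.mem_union_left _ hu2B
    · exact Set.mem_union_right _ ⟨u1, hmemF1, hu1B, hw1B, fun w' _ h => h, hc1⟩
    · exact Set.mem_union_right _ ⟨u2, hmemF2, hu2B, hw2B, fun w' _ h => h, hc2⟩
  have hth : thZF G B ≤ (B.ncard : ℕ∞) + 1 := thZF_le_of hFforce 1 hblue1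
  have hncard : B.ncard = 2 := Set.ncard_pair h12
  have : thZFgraph G ≤ thZF G B := sInf_le ⟨B, rfl⟩
  refine this.trans (hth.trans ?_)
  rw [hncard]
  norm_num

lemma main_forward (h : thZFgraph G = 3) :
    Fintype.card V = 3 ∨ (Fintype.card V = 4 ∧ P4cond G) := by
  have h3 : 3 ≤ Fintype.card V := by
    have h1 : (3 : ℕ∞) ≤ (Fintype.card V : ℕ∞) := h ▸ thZFgraph_le_card
    exact_mod_cast h1
  have hle3 : thZFgraph G ≤ ((3 : ℕ) : ℕ∞) := by rw [h]; norm_num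
  obtain ⟨B, F, t, hF, hu, hle⟩ := extract hle3
  have hfun := isZF_functional hF
  have hge : 3 ≤ B.ncard + t := by
    have h1 : (3 : ℕ∞) ≤ (B.ncard : ℕ∞) + (t : ℕ∞) := by
      rw [← h]
      have hA : thZFgraph G ≤ thZF G B := sInf_le ⟨B, rfl⟩
      exact hA.trans (thZF_le_of hF t hu)
    have h2 : ((3 : ℕ) : ℕ∞) ≤ ((B.ncard + t : ℕ) : ℕ∞) := by push_cast; exact_mod_cast h1
    exact_mod_cast h2
  have heq : B.ncard + t = 3 := le_antisymm hle hge
  have hnuniv : Fintype.card V = (Set.univ : Set V).ncard := card_eq_ncard_univ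
  have hb0 : B.ncard ≠ 0 := by
    intro h0
    have hB : B = ∅ := (Set.ncard_eq_zero (Set.toFinite _)).mp h0
    subst hB
    rw [zfBlueAt_empty] at hu
    rw [hnuniv, ← hu] at h3
    simp at h3
  -- enumerate (B.ncard, t)
  have hcases : (B.ncard = 3 ∧ t = 0) ∨ (B.ncard = 2 ∧ t = 1) ∨ (B.ncard = 1 ∧ t = 2) := by
    omega
  rcases hcases with ⟨hb, ht⟩ | ⟨hb, ht⟩ | ⟨hb, ht⟩
  · -- t = 0 : B = univ
    subst ht
    left
    rw [hnuniv, ← hu]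
    exact hb
  · -- |B| = 2, t = 1
    subst ht
    have hcard4 : Fintype.card V ≤ 4 := by
      have h4 := ncard_zfBlueAt_le (G := G) (B := B) hfun 1
      rw [hu, ← hnuniv, hb] at h4
      omega
    rcases (by omega : Fintype.card V = 3 ∨ Fintype.card V = 4) with h3' | h4'
    · exact Or.inl h3'
    right
    refine ⟨h4', ?_⟩
    -- get the two white vertices
    have hBsub : B ⊆ Set.univ := Set.subset_univ _
    have hdiff : (Set.univ \ B).ncard = 2 := by
      rw [Set.ncard_diff hBsub (Set.toFinite _), ← hnuniv, h4', hb]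
    obtain ⟨w1, w2, hw12, hWeq⟩ := Set.ncard_eq_two.mp hdiff
    have hw1 : w1 ∈ Set.univ \ B := by rw [hWeq]; exact Set.mem_insert _ _
    have hw2 : w2 ∈ Set.univ \ B := by rw [hWeq]; exact Set.mem_insert_of_mem _ rfl
    have hw1blue : w1 ∈ zfstep G F B B := by
      rw [show zfstep G F B B = zfBlueAt G F B 1 from rfl, hu]; trivial
    have hw2blue : w2 ∈ zfstep G F B B := by
      rw [show zfstep G F B B = zfBlueAt G F B 1 from rfl, hu]; trivial
    obtain ⟨v1, hv1F, hv1B, _, _, hc1⟩ := zfstep_diff_witness hw1blue hw1.2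
    obtain ⟨v2, hv2F, hv2B, _, _, hc2⟩ := zfstep_diff_witness hw2blue hw2.2
    have hv12 : v1 ≠ v2 := by
      rintro rfl
      exact hw12 (hfun _ _ _ hv1F hv2F)
    have hBeq : B = {v1, v2} := by
      refine (Set.eq_of_subset_of_ncard_le ?_ ?_ (Set.toFinite _)).symm
      · intro x hx
        rcases hx with rfl | hx
        · exact hv1B
        · rw [Set.mem_singleton_iff] at hx; exact hx ▸ hv2B
      · rw [hb, Set.ncard_pair hv12]
    have hBmem : ∀ x, x ∈ B ↔ x = v1 ∨ x = v2 := by intro x; rw [hBeq]; simp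
    refine ⟨v1, v2, w1, w2, hv12, hw12, fun e => hw1.2 (e ▸ hv1B), fun e => hw1.2 (e ▸ hv2B),
      fun e => hw2.2 (e ▸ hv1B), fun e => hw2.2 (e ▸ hv2B), ?_, ?_⟩
    · rcases hc1 with ⟨ha, hx⟩ | hx
      · refine Or.inl ⟨ha, fun x => ?_⟩
        by_cases hadj : G.Adj v1 x
        · by_cases hxB : x ∈ B
          · have := (hBmem x).mp hxB; tauto
          · have := hx x hadj hxB; tauto
        · tauto
      · refine Or.inr fun x => ?_
        by_cases hadj : G.Adj v1 x
        · have := (hBmem x).mp (hx x hadj); tauto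
        · tauto
    · rcases hc2 with ⟨ha, hx⟩ | hx
      · refine Or.inl ⟨ha, fun x => ?_⟩
        by_cases hadj : G.Adj v2 x
        · by_cases hxB : x ∈ B
          · have := (hBmem x).mp hxB; tauto
          · have := hx x hadj hxB; tauto
        · tauto
      · refine Or.inr fun x => ?_
        by_cases hadj : G.Adj v2 x
        · have := (hBmem x).mp (hx x hadj); tauto
        · tauto
  · -- |B| = 1, t = 2
    subst ht
    left
    have h1card : (zfBlueAt G F B 1).ncard ≤ 2 := by
      have h4 := ncard_zfBlueAt_le (G := G) (B := B) hfun 1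
      rw [hb] at h4
      omega
    by_cases hst : zfBlueAt G F B 1 = zfBlueAt G F B 0
    · have h2 := zfBlueAt_stall (G := G) (F := F) (B := B) (t := 0) hst
      rw [show (0 : ℕ) + 2 = 2 from rfl, show (0 : ℕ) + 1 = 1 from rfl] at h2
      rw [h2, hst] at hu
      have hx : (zfBlueAt G F B 0).ncard = B.ncard := rfl
      rw [hu, ← hnuniv] at hx
      omega
    · -- someone was forced at step 1
      obtain ⟨b0, hb0'⟩ := Set.ncard_eq_one.mp hb
      have hss : zfBlueAt G F B 0 ⊆ zfBlueAt G F B 1 := zfBlueAt_mono 0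
      obtain ⟨w1, hw1mem, hw1not⟩ := Set.exists_of_ssubset (ssubset_of_subset_of_ne hss
        (fun e => hst e.symm))
      have hw1wit : w1 ∈ zfstep G F B B := hw1mem
      obtain ⟨v0, hv0F, hv0B, _, _, _⟩ := zfstep_diff_witness hw1wit hw1not
      -- second-step forcers lie outside B
      have hN2 : ∀ w ∈ zfBlueAt G F B 2 \ zfBlueAt G F B 1,
          ∃ v ∈ zfBlueAt G F B 1 \ B, (v, w) ∈ F := by
        rintro w ⟨hwin, hwout⟩
        obtain ⟨v, hvF, hvB, _, hcond, _⟩ := zfstep_diff_witness hwin hwout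
        refine ⟨v, ⟨hvB, ?_⟩, hvF⟩
        intro hvinB
        have hv0 : v = v0 := by
          rw [hb0'] at hvinB hv0B
          rw [Set.mem_singleton_iff] at hvinB hv0B
          rw [hvinB, hv0B]
        have hw1B : w1 ∈ B := hcond w1 (by rw [hv0]; exact hv0F) hw1mem
        exact hw1not hw1B
      have hdiffle : (zfBlueAt G F B 2 \ zfBlueAt G F B 1).ncard ≤
          (zfBlueAt G F B 1 \ B).ncard :=
        ncard_le_of_witness hfun _ _ hN2
      have hBsub1 : B ⊆ zfBlueAt G F B 1 := zfBlueAt_mono 0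
      have hd : (zfBlueAt G F B 1 \ B).ncard = (zfBlueAt G F B 1).ncard - B.ncard :=
        Set.ncard_diff hBsub1 (Set.toFinite _)
      have hun : (zfBlueAt G F B 2).ncard ≤
          (zfBlueAt G F B 1).ncard + (zfBlueAt G F B 2 \ zfBlueAt G F B 1).ncard := by
        conv_lhs => rw [← Set.union_diff_cancel (zfBlueAt_mono (G := G) (F := F) (B := B) 1)]
        exact Set.ncard_union_le _ _
      have hfin : Fintype.card V = (zfBlueAt G F B 2).ncard := by rw [hnuniv, hu]
      omega

def eIdx4 : Fin 4 → Fin 4 → Fin 6 := ![![0, 0, 1, 2], ![0, 0, 3, 4], ![1, 3, 0, 5], ![2, 4, 5, 0]]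
def p1 : Fin 6 → Fin 4 := ![0, 0, 0, 1, 1, 2]
def p2 : Fin 6 → Fin 4 := ![1, 2, 3, 2, 3, 3]

def adjB4 (b : Fin 6 → Bool) (i j : Fin 4) : Bool := decide (i ≠ j) && b (eIdx4 i j)

lemma adjB4_symm (b : Fin 6 → Bool) (i j : Fin 4) : adjB4 b i j = adjB4 b j i := by
  have he : eIdx4 i j = eIdx4 j i := by revert i j; decide
  simp only [adjB4, he]
  by_cases h : i = j
  · subst h; rfl
  · simp [h, Ne.symm h]

def ofB4 (b : Fin 6 → Bool) : SimpleGraph (Fin 4) where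
  Adj i j := adjB4 b i j = true
  symm := ⟨by intro i j h; rwa [adjB4_symm]⟩
  loopless := ⟨by intro i h; simp [adjB4] at h⟩

instance (b : Fin 6 → Bool) : DecidableRel (ofB4 b).Adj :=
  fun i j => inferInstanceAs (Decidable (adjB4 b i j = true))

instance {W : Type*} [Fintype W] [DecidableEq W] (G : SimpleGraph W) [DecidableRel G.Adj]
    (u v w : W) : Decidable (okP G u v w) := by
  unfold okP; infer_instance

instance {W : Type*} [Fintype W] [DecidableEq W] (G : SimpleGraph W) [DecidableRel G.Adj] :
    Decidable (P4cond G) := by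
  unfold P4cond; infer_instance

def IsoMat4 (b c : Fin 6 → Bool) : Prop :=
  ∃ σ : Equiv.Perm (Fin 4), ∀ i j, adjB4 b i j = adjB4 c (σ i) (σ j)

instance (b c : Fin 6 → Bool) : Decidable (IsoMat4 b c) := by
  unfold IsoMat4; infer_instance

def vC4 : Fin 6 → Bool := ![true, false, true, true, false, true]
def vP4 : Fin 6 → Bool := ![true, false, false, true, false, true]
def v2K2 : Fin 6 → Bool := ![true, false, false, false, false, true]
def vP3K1 : Fin 6 → Bool := ![false, false, false, true, false, true]
def vK2 : Fin 6 → Bool := ![true, false, false, false, false, false]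
def vE4 : Fin 6 → Bool := ![false, false, false, false, false, false]

set_option maxRecDepth 10000 in
set_option maxHeartbeats 4000000 in
lemma KEY4 : ∀ b : Fin 6 → Bool, P4cond (ofB4 b) ↔
    (IsoMat4 b vC4 ∨ IsoMat4 b vP4 ∨ IsoMat4 b v2K2 ∨ IsoMat4 b vP3K1 ∨
      IsoMat4 b vK2 ∨ IsoMat4 b vE4) := by decide

/-! ### 3-vertex analogue -/

def eIdx3 : Fin 3 → Fin 3 → Fin 3 := ![![0, 0, 1], ![0, 0, 2], ![1, 2, 0]]
def q1 : Fin 3 → Fin 3 := ![0, 0, 1]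
def q2 : Fin 3 → Fin 3 := ![1, 2, 2]

def adjB3 (b : Fin 3 → Bool) (i j : Fin 3) : Bool := decide (i ≠ j) && b (eIdx3 i j)

lemma adjB3_symm (b : Fin 3 → Bool) (i j : Fin 3) : adjB3 b i j = adjB3 b j i := by
  have he : eIdx3 i j = eIdx3 j i := by revert i j; decide
  simp only [adjB3, he]
  by_cases h : i = j
  · subst h; rfl
  · simp [h, Ne.symm h]

def ofB3 (b : Fin 3 → Bool) : SimpleGraph (Fin 3) where
  Adj i j := adjB3 b i j = true
  symm := ⟨by intro i j h; rwa [adjB3_symm]⟩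
  loopless := ⟨by intro i h; simp [adjB3] at h⟩

instance (b : Fin 3 → Bool) : DecidableRel (ofB3 b).Adj :=
  fun i j => inferInstanceAs (Decidable (adjB3 b i j = true))

def IsoMat3 (b c : Fin 3 → Bool) : Prop :=
  ∃ σ : Equiv.Perm (Fin 3), ∀ i j, adjB3 b i j = adjB3 c (σ i) (σ j)

instance (b c : Fin 3 → Bool) : Decidable (IsoMat3 b c) := by
  unfold IsoMat3; infer_instance

def vK3 : Fin 3 → Bool := ![true, true, true]
def vP3 : Fin 3 → Bool := ![true, false, true]
def vK1K2 : Fin 3 → Bool := ![false, false, true]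
def vE3 : Fin 3 → Bool := ![false, false, false]

lemma KEY3 : ∀ b : Fin 3 → Bool,
    IsoMat3 b vK3 ∨ IsoMat3 b vP3 ∨ IsoMat3 b vK1K2 ∨ IsoMat3 b vE3 := by decide

/-! ### From matrix isomorphism to graph isomorphism -/

lemma iso_of_isoMat4 {b c : Fin 6 → Bool} (h : IsoMat4 b c) : Nonempty (ofB4 b ≃g ofB4 c) := by
  obtain ⟨σ, hσ⟩ := h
  exact ⟨⟨σ, @fun i j => by
    show adjB4 c (σ i) (σ j) = true ↔ adjB4 b i j = true
    rw [hσ i j]⟩⟩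

lemma iso_of_isoMat3 {b c : Fin 3 → Bool} (h : IsoMat3 b c) : Nonempty (ofB3 b ≃g ofB3 c) := by
  obtain ⟨σ, hσ⟩ := h
  exact ⟨⟨σ, @fun i j => by
    show adjB3 c (σ i) (σ j) = true ↔ adjB3 b i j = true
    rw [hσ i j]⟩⟩

/-! ### Encoding an arbitrary graph as a matrix graph -/

lemma graph_to_ofB4 {V : Type*} [Fintype V] (G : SimpleGraph V) (h4 : Fintype.card V = 4) :
    ∃ b : Fin 6 → Bool, Nonempty (G ≃g ofB4 b) := by
  classical
  let e : V ≃ Fin 4 := Fintype.equivFinOfCardEq h4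
  let b : Fin 6 → Bool := fun k => decide (G.Adj (e.symm (p1 k)) (e.symm (p2 k)))
  have key : ∀ i j : Fin 4, ((ofB4 b).Adj i j ↔ G.Adj (e.symm i) (e.symm j)) := by
    intro i j
    by_cases hij : i = j
    · subst hij
      constructor
      · intro h; exact absurd h ((ofB4 b).loopless.irrefl i)
      · intro h; exact absurd h (G.loopless.irrefl _)
    · have hpair : (p1 (eIdx4 i j) = i ∧ p2 (eIdx4 i j) = j) ∨
          (p1 (eIdx4 i j) = j ∧ p2 (eIdx4 i j) = i) := by
        revert hij; revert i j; decide
      have hadj : (ofB4 b).Adj i j ↔ b (eIdx4 i j) = true := by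
        show adjB4 b i j = true ↔ _
        simp [adjB4, hij]
      rcases hpair with ⟨ha, hb'⟩ | ⟨ha, hb'⟩
      · rw [hadj]
        simp only [b, ha, hb', decide_eq_true_eq]
      · rw [hadj]
        simp only [b, ha, hb', decide_eq_true_eq]
        exact ⟨fun h => h.symm, fun h => h.symm⟩
  refine ⟨b, ⟨⟨e, @fun a a' => ?_⟩⟩⟩
  rw [key (e a) (e a')]
  simp

lemma graph_to_ofB3 {V : Type*} [Fintype V] (G : SimpleGraph V) (h3 : Fintype.card V = 3) :
    ∃ b : Fin 3 → Bool, Nonempty (G ≃g ofB3 b) := by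
  classical
  let e : V ≃ Fin 3 := Fintype.equivFinOfCardEq h3
  let b : Fin 3 → Bool := fun k => decide (G.Adj (e.symm (q1 k)) (e.symm (q2 k)))
  have key : ∀ i j : Fin 3, ((ofB3 b).Adj i j ↔ G.Adj (e.symm i) (e.symm j)) := by
    intro i j
    by_cases hij : i = j
    · subst hij
      constructor
      · intro h; exact absurd h ((ofB3 b).loopless.irrefl i)
      · intro h; exact absurd h (G.loopless.irrefl _)
    · have hpair : (q1 (eIdx3 i j) = i ∧ q2 (eIdx3 i j) = j) ∨
          (q1 (eIdx3 i j) = j ∧ q2 (eIdx3 i j) = i) := by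
        revert hij; revert i j; decide
      have hadj : (ofB3 b).Adj i j ↔ b (eIdx3 i j) = true := by
        show adjB3 b i j = true ↔ _
        simp [adjB3, hij]
      rcases hpair with ⟨ha, hb'⟩ | ⟨ha, hb'⟩
      · rw [hadj]
        simp only [b, ha, hb', decide_eq_true_eq]
      · rw [hadj]
        simp only [b, ha, hb', decide_eq_true_eq]
        exact ⟨fun h => h.symm, fun h => h.symm⟩
  refine ⟨b, ⟨⟨e, @fun a a' => ?_⟩⟩⟩
  rw [key (e a) (e a')]
  simp

/-! ### Invariance of `P4cond` under isomorphism -/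

lemma P4cond_iso {V W : Type*} {G : SimpleGraph V} {H : SimpleGraph W} (e : G ≃g H)
    (h : P4cond G) : P4cond H := by
  obtain ⟨u1, u2, w1, w2, h12, hw, h11, h21, h12', h22, hok1, hok2⟩ := h
  have hinj : Function.Injective e := e.toEquiv.injective
  have hmap : ∀ u v w, okP G u v w → okP H (e u) (e v) (e w) := by
    intro u v w hok
    rcases hok with ⟨ha, hx⟩ | hx
    · refine Or.inl ⟨e.map_adj_iff.mpr ha, fun y => ?_⟩
      rcases hx (e.symm y) with h | h | h | h
      · refine Or.inl fun hy => h ?_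
        have : H.Adj (e u) (e (e.symm y)) := by rwa [e.apply_symm_apply]
        exact e.map_adj_iff.mp this
      · exact Or.inr (Or.inl (by rw [← h, e.apply_symm_apply]))
      · exact Or.inr (Or.inr (Or.inl (by rw [← h, e.apply_symm_apply])))
      · exact Or.inr (Or.inr (Or.inr (by rw [← h, e.apply_symm_apply])))
    · refine Or.inr fun y => ?_
      rcases hx (e.symm y) with h | h | h
      · refine Or.inl fun hy => h ?_
        have : H.Adj (e u) (e (e.symm y)) := by rwa [e.apply_symm_apply]
        exact e.map_adj_iff.mp this
      · exact Or.inr (Or.inl (by rw [← h, e.apply_symm_apply]))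
      · exact Or.inr (Or.inr (by rw [← h, e.apply_symm_apply]))
  exact ⟨e u1, e u2, e w1, e w2, fun hh => h12 (hinj hh), fun hh => hw (hinj hh),
    fun hh => h11 (hinj hh), fun hh => h21 (hinj hh), fun hh => h12' (hinj hh),
    fun hh => h22 (hinj hh), hmap _ _ _ hok1, hmap _ _ _ hok2⟩

noncomputable def isoTgtC4 : ofB4 vC4 ≃g SimpleGraph.cycleGraph 4 := by
  have h : ∀ a b : Fin 4, ((SimpleGraph.cycleGraph 4).Adj a b ↔ (ofB4 vC4).Adj a b) := by
    decide
  exact ⟨Equiv.refl _, @fun a b => h a b⟩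

noncomputable def isoTgtP4 : ofB4 vP4 ≃g SimpleGraph.pathGraph 4 := by
  have h : ∀ a b : Fin 4, ((SimpleGraph.pathGraph 4).Adj a b ↔ (ofB4 vP4).Adj a b) := by
    intro a b
    rw [pathGraph_adj]
    revert a b
    decide
  exact ⟨Equiv.refl _, @fun a b => h a b⟩

noncomputable def isoTgt2K2 : ofB4 v2K2 ≃g
    SimpleGraph.fromEdgeSet {s((0 : Fin 4), (1 : Fin 4)), s((2 : Fin 4), (3 : Fin 4))} := by
  have h : ∀ a b : Fin 4,
      (((s(a, b) = s((0 : Fin 4), (1 : Fin 4)) ∨ s(a, b) = s((2 : Fin 4), (3 : Fin 4))) ∧ a ≠ b) ↔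
        (ofB4 v2K2).Adj a b) := by decide
  refine ⟨Equiv.refl _, @fun a b => ?_⟩
  rw [show (Equiv.refl (Fin 4)) a = a from rfl, show (Equiv.refl (Fin 4)) b = b from rfl,
    fromEdgeSet_adj, Set.mem_insert_iff, Set.mem_singleton_iff]
  exact h a b

noncomputable def isoTgtP3K1 : ofB4 vP3K1 ≃g
    SimpleGraph.fromEdgeSet {s((1 : Fin 4), (2 : Fin 4)), s((2 : Fin 4), (3 : Fin 4))} := by
  have h : ∀ a b : Fin 4,
      (((s(a, b) = s((1 : Fin 4), (2 : Fin 4)) ∨ s(a, b) = s((2 : Fin 4), (3 : Fin 4))) ∧ a ≠ b) ↔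
        (ofB4 vP3K1).Adj a b) := by decide
  refine ⟨Equiv.refl _, @fun a b => ?_⟩
  rw [show (Equiv.refl (Fin 4)) a = a from rfl, show (Equiv.refl (Fin 4)) b = b from rfl,
    fromEdgeSet_adj, Set.mem_insert_iff, Set.mem_singleton_iff]
  exact h a b

noncomputable def isoTgtK2 : ofB4 vK2 ≃g SimpleGraph.fromEdgeSet {s((0 : Fin 4), (1 : Fin 4))} := by
  have h : ∀ a b : Fin 4,
      ((s(a, b) = s((0 : Fin 4), (1 : Fin 4)) ∧ a ≠ b) ↔ (ofB4 vK2).Adj a b) := by decide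
  refine ⟨Equiv.refl _, @fun a b => ?_⟩
  rw [show (Equiv.refl (Fin 4)) a = a from rfl, show (Equiv.refl (Fin 4)) b = b from rfl,
    fromEdgeSet_adj, Set.mem_singleton_iff]
  exact h a b

noncomputable def isoTgtE4 : ofB4 vE4 ≃g (⊥ : SimpleGraph (Fin 4)) := by
  have h : ∀ a b : Fin 4, ((⊥ : SimpleGraph (Fin 4)).Adj a b ↔ (ofB4 vE4).Adj a b) := by decide
  exact ⟨Equiv.refl _, @fun a b => h a b⟩

noncomputable def isoTgtK3 : ofB3 vK3 ≃g (⊤ : SimpleGraph (Fin 3)) := by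
  have h : ∀ a b : Fin 3, ((⊤ : SimpleGraph (Fin 3)).Adj a b ↔ (ofB3 vK3).Adj a b) := by decide
  exact ⟨Equiv.refl _, @fun a b => h a b⟩

noncomputable def isoTgtP3 : ofB3 vP3 ≃g SimpleGraph.pathGraph 3 := by
  have h : ∀ a b : Fin 3, ((SimpleGraph.pathGraph 3).Adj a b ↔ (ofB3 vP3).Adj a b) := by
    intro a b
    rw [pathGraph_adj]
    revert a b
    decide
  exact ⟨Equiv.refl _, @fun a b => h a b⟩

noncomputable def isoTgtK1K2 : ofB3 vK1K2 ≃g SimpleGraph.fromEdgeSet {s((1 : Fin 3), (2 : Fin 3))} := by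
  have h : ∀ a b : Fin 3,
      ((s(a, b) = s((1 : Fin 3), (2 : Fin 3)) ∧ a ≠ b) ↔ (ofB3 vK1K2).Adj a b) := by decide
  refine ⟨Equiv.refl _, @fun a b => ?_⟩
  rw [show (Equiv.refl (Fin 3)) a = a from rfl, show (Equiv.refl (Fin 3)) b = b from rfl,
    fromEdgeSet_adj, Set.mem_singleton_iff]
  exact h a b

noncomputable def isoTgtE3 : ofB3 vE3 ≃g (⊥ : SimpleGraph (Fin 3)) := by
  have h : ∀ a b : Fin 3, ((⊥ : SimpleGraph (Fin 3)).Adj a b ↔ (ofB3 vE3).Adj a b) := by decide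
  exact ⟨Equiv.refl _, @fun a b => h a b⟩

lemma P4cond_vC4 : P4cond (ofB4 vC4) := by decide
lemma P4cond_vP4 : P4cond (ofB4 vP4) := by decide
lemma P4cond_v2K2 : P4cond (ofB4 v2K2) := by decide
lemma P4cond_vP3K1 : P4cond (ofB4 vP3K1) := by decide
lemma P4cond_vK2 : P4cond (ofB4 vK2) := by decide
lemma P4cond_vE4 : P4cond (ofB4 vE4) := by decide

end Aux

/-- `th_⌊Z⌋(G) = 3` iff `G` is one of the ten graphs
`C_4, P_4, 2K_2, K_1 ⊔ P_3, K_2 ⊔ 2K_1, 4K_1, K_3, P_3, K_1 ⊔ K_2, 3K_1`. -/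
theorem stmt16 {V : Type*} [Fintype V] (G : SimpleGraph V) :
    thZFgraph G = 3 ↔
      Nonempty (G ≃g SimpleGraph.cycleGraph 4) ∨
      Nonempty (G ≃g SimpleGraph.pathGraph 4) ∨
      Nonempty (G ≃g SimpleGraph.fromEdgeSet {s((0 : Fin 4), (1 : Fin 4)), s((2 : Fin 4), (3 : Fin 4))}) ∨
      Nonempty (G ≃g SimpleGraph.fromEdgeSet {s((1 : Fin 4), (2 : Fin 4)), s((2 : Fin 4), (3 : Fin 4))}) ∨
      Nonempty (G ≃g SimpleGraph.fromEdgeSet {s((0 : Fin 4), (1 : Fin 4))}) ∨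
      Nonempty (G ≃g (⊥ : SimpleGraph (Fin 4))) ∨
      Nonempty (G ≃g (⊤ : SimpleGraph (Fin 3))) ∨
      Nonempty (G ≃g SimpleGraph.pathGraph 3) ∨
      Nonempty (G ≃g SimpleGraph.fromEdgeSet {s((1 : Fin 3), (2 : Fin 3))}) ∨
      Nonempty (G ≃g (⊥ : SimpleGraph (Fin 3))) := by
  constructor
  · intro h
    rcases main_forward h with h3 | ⟨h4, hP⟩
    · obtain ⟨b, ⟨e⟩⟩ := graph_to_ofB3 G h3
      rcases KEY3 b with hm | hm | hm | hm
      · obtain ⟨e2⟩ := iso_of_isoMat3 hm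
        exact Or.inr (Or.inr (Or.inr (Or.inr (Or.inr (Or.inr (Or.inl
          ⟨(e.trans e2).trans isoTgtK3⟩))))))
      · obtain ⟨e2⟩ := iso_of_isoMat3 hm
        exact Or.inr (Or.inr (Or.inr (Or.inr (Or.inr (Or.inr (Or.inr (Or.inl
          ⟨(e.trans e2).trans isoTgtP3⟩)))))))
      · obtain ⟨e2⟩ := iso_of_isoMat3 hm
        exact Or.inr (Or.inr (Or.inr (Or.inr (Or.inr (Or.inr (Or.inr (Or.inr (Or.inl
          ⟨(e.trans e2).trans isoTgtK1K2⟩))))))))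
      · obtain ⟨e2⟩ := iso_of_isoMat3 hm
        exact Or.inr (Or.inr (Or.inr (Or.inr (Or.inr (Or.inr (Or.inr (Or.inr (Or.inr
          ⟨(e.trans e2).trans isoTgtE3⟩))))))))
    · obtain ⟨b, ⟨e⟩⟩ := graph_to_ofB4 G h4
      have hPb : P4cond (ofB4 b) := P4cond_iso e hP
      rcases (KEY4 b).mp hPb with hm | hm | hm | hm | hm | hm
      · obtain ⟨e2⟩ := iso_of_isoMat4 hm
        exact Or.inl ⟨(e.trans e2).trans isoTgtC4⟩
      · obtain ⟨e2⟩ := iso_of_isoMat4 hm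
        exact Or.inr (Or.inl ⟨(e.trans e2).trans isoTgtP4⟩)
      · obtain ⟨e2⟩ := iso_of_isoMat4 hm
        exact Or.inr (Or.inr (Or.inl ⟨(e.trans e2).trans isoTgt2K2⟩))
      · obtain ⟨e2⟩ := iso_of_isoMat4 hm
        exact Or.inr (Or.inr (Or.inr (Or.inl ⟨(e.trans e2).trans isoTgtP3K1⟩)))
      · obtain ⟨e2⟩ := iso_of_isoMat4 hm
        exact Or.inr (Or.inr (Or.inr (Or.inr (Or.inl ⟨(e.trans e2).trans isoTgtK2⟩))))
      · obtain ⟨e2⟩ := iso_of_isoMat4 hm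
        exact Or.inr (Or.inr (Or.inr (Or.inr (Or.inr (Or.inl
          ⟨(e.trans e2).trans isoTgtE4⟩)))))
  · intro h
    have done4 : ∀ {T : SimpleGraph (Fin 4)}, (G ≃g T) → P4cond T → thZFgraph G = 3 := by
      intro T e hPT
      have h4 : Fintype.card V = 4 := by
        rw [Fintype.card_congr e.toEquiv, Fintype.card_fin]
      have hP : P4cond G := P4cond_iso e.symm hPT
      exact le_antisymm (thZFgraph_le_three_of_P4 h4 hP) (three_le_thZFgraph (by omega))
    have done3 : ∀ {T : SimpleGraph (Fin 3)}, (G ≃g T) → thZFgraph G = 3 := by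
      intro T e
      have h3 : Fintype.card V = 3 := by
        rw [Fintype.card_congr e.toEquiv, Fintype.card_fin]
      have hle : thZFgraph G ≤ 3 := by
        have h1 := thZFgraph_le_card (G := G)
        rw [h3] at h1
        exact h1.trans_eq (by norm_num)
      exact le_antisymm hle (three_le_thZFgraph (by omega))
    rcases h with h | h | h | h | h | h | h | h | h | h
    · exact h.elim fun e => done4 e (P4cond_iso isoTgtC4 P4cond_vC4)
    · exact h.elim fun e => done4 e (P4cond_iso isoTgtP4 P4cond_vP4)
    · exact h.elim fun e => done4 e (P4cond_iso isoTgt2K2 P4cond_v2K2)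
    · exact h.elim fun e => done4 e (P4cond_iso isoTgtP3K1 P4cond_vP3K1)
    · exact h.elim fun e => done4 e (P4cond_iso isoTgtK2 P4cond_vK2)
    · exact h.elim fun e => done4 e (P4cond_iso isoTgtE4 P4cond_vE4)
    · exact h.elim fun e => done3 e
    · exact h.elim fun e => done3 e
    · exact h.elim fun e => done3 e
    · exact h.elim fun e => done3 e


end ZFT
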